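/- Let μ be a Borel probability measure on ℝ^d and let S and S* be nonempty compact subsets of ℝ^d such that the pushforward measures μ_S and μ_{S*} are non-atomic with finite first moments. Suppose there exist r* > 0 and α ∈ (0,1) such that F_{μ_S}(r) ≤ α F_{μ_{S*}}(r) for all r ∈ (0, r*). If W : [0,1] → [0,∞) is nonincreasing with W(t) = 0 for all t ≥ F_{μ_{S*}}(r*), then Φ_W(μ_S) − Φ_W(μ_{S*}) ≥ (1−α) ∫_0^{r*} W( F_{μ_{S*}}(r) ) F_{μ_{S*}}(r) dr. -/

import Mathlib

open MeasureTheory Set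

/-- The cumulative distribution function `F_ρ(r) = ρ([0,r])`. -/
noncomputable def cdf (ρ : Measure ℝ) (r : ℝ) : ℝ := (ρ (Iic r)).toReal

/-- The robust functional `Φ_W(ρ) = ∫ r W(F_ρ(r)) dρ(r)`. -/
noncomputable def PhiW (W : ℝ → ℝ) (ρ : Measure ℝ) : ℝ := ∫ r, r * W (cdf ρ r) ∂ρ

/-- The distortion function `d_S(x) = min_{y ∈ S} ‖x - y‖² = (dist(x,S))²`. -/
noncomputable def distS {d : ℕ} (S : Set (EuclideanSpace ℝ (Fin d)))
    (x : EuclideanSpace ℝ (Fin d)) : ℝ := (Metric.infDist x S) ^ 2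

/-- The pushforward `μ_S` of `μ` under `d_S`. -/
noncomputable def pushS {d : ℕ} (μ : Measure (EuclideanSpace ℝ (Fin d)))
    (S : Set (EuclideanSpace ℝ (Fin d))) : Measure ℝ := Measure.map (distS S) μ

open Filter Topology
open scoped ENNReal

section general
variable (ρ : Measure ℝ) [IsProbabilityMeasure ρ]

lemma cdf_eq_prob (r : ℝ) : cdf ρ r = ProbabilityTheory.cdf ρ r :=
  (ProbabilityTheory.cdf_eq_real ρ r).symm

lemma cdf_mono : Monotone (cdf ρ) := by
  intro a b hab
  rw [cdf_eq_prob, cdf_eq_prob]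
  exact ProbabilityTheory.monotone_cdf ρ hab

omit [IsProbabilityMeasure ρ] in
lemma cdf_nonneg' (r : ℝ) : 0 ≤ cdf ρ r := ENNReal.toReal_nonneg

lemma cdf_le_one' (r : ℝ) : cdf ρ r ≤ 1 := by
  rw [cdf_eq_prob]; exact ProbabilityTheory.cdf_le_one ρ r

lemma cdf_measurable : Measurable (cdf ρ) := (cdf_mono ρ).measurable

lemma ofReal_cdf' (r : ℝ) : ENNReal.ofReal (cdf ρ r) = ρ (Iic r) := by
  rw [cdf_eq_prob]; exact ProbabilityTheory.ofReal_cdf ρ r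

lemma cdf_fun_eq : cdf ρ = (ProbabilityTheory.cdf ρ : ℝ → ℝ) := funext (cdf_eq_prob ρ)

lemma cdf_leftLim (hna : ∀ r : ℝ, ρ {r} = 0) (x : ℝ) :
    Function.leftLim (cdf ρ) x = cdf ρ x := by
  rw [cdf_fun_eq]
  set f := ProbabilityTheory.cdf ρ
  have h1 : f.measure {x} = 0 := by rw [ProbabilityTheory.measure_cdf]; exact hna x
  rw [f.measure_singleton] at h1
  have h2 : Function.leftLim f x ≤ f x := f.mono.leftLim_le le_rfl
  have h3 : f x - Function.leftLim f x ≤ 0 := by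
    by_contra h
    push_neg at h
    exact (ENNReal.ofReal_pos.mpr h).ne' h1
  linarith

/-- The key "uniform transform" computation. -/
lemma measure_cdf_le (hna : ∀ r : ℝ, ρ {r} = 0) {t : ℝ} (ht0 : 0 ≤ t) (ht1 : t < 1) :
    ρ {x | cdf ρ x ≤ t} = ENNReal.ofReal t := by
  classical
  set A := {x | cdf ρ x ≤ t} with hA
  have hmono := cdf_mono ρ
  have hdc : ∀ ⦃x y : ℝ⦄, x ≤ y → y ∈ A → x ∈ A := fun x y hxy hy =>
    le_trans (hmono hxy) hy
  rcases eq_empty_or_nonempty A with hAe | hAne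
  · have ht : t ≤ 0 := by
      by_contra h
      push_neg at h
      have h0 : Tendsto (cdf ρ) atBot (𝓝 0) := by
        rw [cdf_fun_eq]; exact ProbabilityTheory.tendsto_cdf_atBot ρ
      obtain ⟨x, hx⟩ := (h0.eventually (eventually_lt_nhds h)).exists
      exact absurd hx.le (by simpa [hA] using Set.eq_empty_iff_forall_notMem.mp hAe x)
    have : t = 0 := le_antisymm ht ht0
    simp [hAe, this]
  · by_cases hbdd : BddAbove A
    · set a := sSup A with ha
      have hsub1 : Iio a ⊆ A := by
        intro x hx
        obtain ⟨y, hyA, hxy⟩ := exists_lt_of_lt_csSup hAne hx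
        exact hdc hxy.le hyA
      have hsub2 : A ⊆ Iic a := fun x hx => le_csSup hbdd hx
      have hFa : cdf ρ a = t := by
        have hle : cdf ρ a ≤ t := by
          rw [← cdf_leftLim ρ hna a,
            Monotone.leftLim_eq_sSup hmono]
          apply csSup_le ((Set.nonempty_Iio).image (cdf ρ))
          rintro y ⟨x, hx, rfl⟩
          exact hsub1 hx
        have hge : t ≤ cdf ρ a := by
          have hr : Function.rightLim (cdf ρ) a = cdf ρ a := by
            rw [cdf_fun_eq]; exact (ProbabilityTheory.cdf ρ).rightLim_eq a
          rw [← hr, Monotone.rightLim_eq_sInf hmono]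
          apply le_csInf ((Set.nonempty_Ioi).image (cdf ρ))
          rintro y ⟨x, hx, rfl⟩
          by_contra h
          push_neg at h
          exact absurd (le_csSup hbdd (h.le : cdf ρ x ≤ t)) (not_le.mpr hx)
        linarith
      have hIio : ρ (Iio a) = ρ (Iic a) := measure_congr (Iio_ae_eq_Iic' (hna a))
      refine le_antisymm ?_ ?_
      · calc ρ A ≤ ρ (Iic a) := measure_mono hsub2
          _ = ENNReal.ofReal t := by rw [← ofReal_cdf' ρ a, hFa]
      · calc ENNReal.ofReal t = ρ (Iic a) := by rw [← ofReal_cdf' ρ a, hFa]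
          _ = ρ (Iio a) := hIio.symm
          _ ≤ ρ A := measure_mono hsub1
    · exfalso
      have hAuniv : A = univ := by
        ext x
        simp only [mem_univ, iff_true]
        obtain ⟨y, hyA, hxy⟩ := not_bddAbove_iff.mp hbdd x
        exact hdc hxy.le hyA
      have h1 : Tendsto (cdf ρ) atTop (𝓝 1) := by
        rw [cdf_fun_eq]; exact ProbabilityTheory.tendsto_cdf_atTop ρ
      have : (1 : ℝ) ≤ t := by
        apply le_of_tendsto h1
        filter_upwards with x
        exact (hAuniv ▸ mem_univ x : x ∈ A)
      linarith

lemma map_cdf (hna : ∀ r : ℝ, ρ {r} = 0) :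
    Measure.map (cdf ρ) ρ = volume.restrict (Ioc (0:ℝ) 1) := by
  have hmeas := cdf_measurable ρ
  haveI : IsProbabilityMeasure (Measure.map (cdf ρ) ρ) :=
    Measure.isProbabilityMeasure_map hmeas.aemeasurable
  refine Measure.ext_of_Iic (Measure.map (cdf ρ) ρ) _ (fun t => ?_)
  rw [Measure.map_apply hmeas measurableSet_Iic,
    Measure.restrict_apply measurableSet_Iic]
  rcases lt_or_ge t 0 with ht | ht
  · have h1 : (cdf ρ) ⁻¹' (Iic t) = ∅ := by
      ext x; simp only [mem_preimage, mem_Iic, mem_empty_iff_false, iff_false, not_le]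
      exact lt_of_lt_of_le ht (cdf_nonneg' ρ x)
    have h2 : Iic t ∩ Ioc (0:ℝ) 1 = ∅ := by
      ext x; simp only [mem_inter_iff, mem_Iic, mem_Ioc, mem_empty_iff_false, iff_false]
      rintro ⟨h, h0, _⟩; linarith
    simp [h1, h2]
  · rcases lt_or_ge t 1 with ht1 | ht1
    · have h1 : (cdf ρ) ⁻¹' (Iic t) = {x | cdf ρ x ≤ t} := rfl
      rw [h1, measure_cdf_le ρ hna ht ht1]
      have h2 : Iic t ∩ Ioc (0:ℝ) 1 = Ioc 0 t := by
        ext x; simp only [mem_inter_iff, mem_Iic, mem_Ioc]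
        constructor
        · rintro ⟨h, h0, _⟩; exact ⟨h0, h⟩
        · rintro ⟨h0, h⟩; exact ⟨h, h0, by linarith⟩
      rw [h2, Real.volume_Ioc]
      simp
    · have h1 : (cdf ρ) ⁻¹' (Iic t) = univ := by
        ext x; simp only [mem_preimage, mem_Iic, mem_univ, iff_true]
        exact le_trans (cdf_le_one' ρ x) ht1
      have h2 : Iic t ∩ Ioc (0:ℝ) 1 = Ioc 0 1 := by
        ext x; simp only [mem_inter_iff, mem_Iic, mem_Ioc]
        constructor
        · rintro ⟨h, h0, h1'⟩; exact ⟨h0, h1'⟩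
        · rintro ⟨h0, h1'⟩; exact ⟨by linarith, h0, h1'⟩
      rw [h1, h2, Real.volume_Ioc]
      simp

end general

section chunk2
variable (ρ : Measure ℝ) [IsProbabilityMeasure ρ]

lemma measure_cdf_le_ub (hna : ∀ r : ℝ, ρ {r} = 0) {t : ℝ} (ht0 : 0 ≤ t) (ht1 : t ≤ 1) :
    ρ {x | cdf ρ x ≤ t} ≤ ENNReal.ofReal t := by
  rcases lt_or_eq_of_le ht1 with h | h
  · exact le_of_eq (measure_cdf_le ρ hna ht0 h)
  · subst h
    calc ρ {x | cdf ρ x ≤ 1} ≤ ρ univ := measure_mono (subset_univ _)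
      _ = 1 := measure_univ
      _ = ENNReal.ofReal 1 := by simp

lemma ae_Ioi_eq (hna : ∀ r : ℝ, ρ {r} = 0) (r : ℝ) :
    (Ioi r : Set ℝ) =ᵐ[ρ] {s | cdf ρ r < cdf ρ s} := by
  rw [ae_eq_set]
  constructor
  · -- Ioi r \ {F r < F s} = {s > r, F s ≤ F r}
    have hsub : (Ioi r) \ {s | cdf ρ r < cdf ρ s} ⊆ {s | cdf ρ s ≤ cdf ρ r} \ Iic r := by
      rintro s ⟨hs1, hs2⟩
      simp only [mem_setOf_eq, not_lt] at hs2
      exact ⟨hs2, fun h => (not_le.mpr (mem_Ioi.mp hs1)) (mem_Iic.mp h)⟩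
    refine le_antisymm (le_trans (measure_mono hsub) ?_) zero_le
    have hm : MeasurableSet {s | cdf ρ s ≤ cdf ρ r} :=
      measurableSet_le (cdf_measurable ρ) measurable_const
    have hsub2 : Iic r ⊆ {s | cdf ρ s ≤ cdf ρ r} := fun x hx => cdf_mono ρ hx
    rw [measure_diff hsub2 measurableSet_Iic.nullMeasurableSet (measure_ne_top ρ _)]
    have h1 : ρ {s | cdf ρ s ≤ cdf ρ r} ≤ ENNReal.ofReal (cdf ρ r) :=
      measure_cdf_le_ub ρ hna (cdf_nonneg' ρ r) (cdf_le_one' ρ r)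
    rw [ofReal_cdf' ρ r] at h1
    exact le_trans (tsub_le_tsub h1 le_rfl) (by simp)
  · have : {s | cdf ρ r < cdf ρ s} \ Ioi r = ∅ := by
      ext s
      simp only [mem_diff, mem_setOf_eq, mem_Ioi, not_lt, mem_empty_iff_false, iff_false,
        not_and, not_le]
      intro h1
      by_contra hc
      push_neg at hc
      exact absurd (cdf_mono ρ hc) (not_le.mpr h1)
    simp [this]

lemma setLIntegral_Ioi_comp_cdf (hna : ∀ r : ℝ, ρ {r} = 0)
    {g : ℝ → ℝ≥0∞} (hg : Measurable g) (r : ℝ) :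
    ∫⁻ s in Ioi r, g (cdf ρ s) ∂ρ = ∫⁻ t in Ioc (cdf ρ r) 1, g t := by
  have hF := cdf_measurable ρ
  have h1 : ∫⁻ s in Ioi r, g (cdf ρ s) ∂ρ
      = ∫⁻ s, (Ioi r).indicator (fun s => g (cdf ρ s)) s ∂ρ :=
    (lintegral_indicator measurableSet_Ioi _).symm
  have h2 : (fun s => (Ioi r).indicator (fun s => g (cdf ρ s)) s)
      =ᵐ[ρ] fun s => {s | cdf ρ r < cdf ρ s}.indicator (fun s => g (cdf ρ s)) s :=
    indicator_ae_eq_of_ae_eq_set (ae_Ioi_eq ρ hna r)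
  have h3 : ∀ s, {s | cdf ρ r < cdf ρ s}.indicator (fun s => g (cdf ρ s)) s
      = (Ioi (cdf ρ r)).indicator g (cdf ρ s) := by
    intro s
    simp only [Set.indicator_apply, mem_setOf_eq, mem_Ioi]
  rw [h1, lintegral_congr_ae h2]
  simp_rw [h3]
  rw [← lintegral_map (hg.indicator measurableSet_Ioi) hF, map_cdf ρ hna,
    lintegral_indicator measurableSet_Ioi, Measure.restrict_restrict measurableSet_Ioi]
  have hset : Ioi (cdf ρ r) ∩ Ioc (0:ℝ) 1 = Ioc (cdf ρ r) 1 := by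
    ext x
    simp only [mem_inter_iff, mem_Ioi, mem_Ioc]
    constructor
    · rintro ⟨h1', h2', h3'⟩; exact ⟨h1', h3'⟩
    · rintro ⟨h1', h2'⟩; exact ⟨h1', lt_of_le_of_lt (cdf_nonneg' ρ r) h1', h2'⟩
  rw [hset]

lemma layer_cake (hna : ∀ r : ℝ, ρ {r} = 0)
    {g : ℝ → ℝ≥0∞} (hg : Measurable g) :
    ∫⁻ s, ENNReal.ofReal s * g (cdf ρ s) ∂ρ
      = ∫⁻ r in Ioi (0:ℝ), ∫⁻ t in Ioc (cdf ρ r) 1, g t := by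
  have hF := cdf_measurable ρ
  set ψ : ℝ → ℝ → ℝ≥0∞ := fun r s =>
    ({p : ℝ × ℝ | 0 < p.1 ∧ p.1 < p.2}).indicator (fun p => g (cdf ρ p.2)) (r, s) with hψ
  have hmeasset : MeasurableSet {p : ℝ × ℝ | 0 < p.1 ∧ p.1 < p.2} := by
    apply MeasurableSet.inter
    · exact measurableSet_lt measurable_const measurable_fst
    · exact measurableSet_lt measurable_fst measurable_snd
  have hstep1 : ∀ s : ℝ, ∫⁻ r, ψ r s = ENNReal.ofReal s * g (cdf ρ s) := by
    intro s
    have : ∀ r, ψ r s = (Ioo (0:ℝ) s).indicator (fun _ => g (cdf ρ s)) r := by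
      intro r
      simp only [hψ, Set.indicator_apply, mem_setOf_eq, mem_Ioo]
    simp_rw [this]
    rw [lintegral_indicator measurableSet_Ioo, setLIntegral_const, Real.volume_Ioo]
    rw [mul_comm]
    congr 1
    rcases le_or_gt s 0 with h | h
    · rw [ENNReal.ofReal_of_nonpos (by linarith), ENNReal.ofReal_of_nonpos h]
    · congr 1; ring
  have hswap : ∫⁻ s, ∫⁻ r, ψ r s ∂(volume : Measure ℝ) ∂ρ
      = ∫⁻ r, ∫⁻ s, ψ r s ∂ρ ∂(volume : Measure ℝ) := by
    apply lintegral_lintegral_swap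
    apply Measurable.aemeasurable
    have : (Function.uncurry fun s r => ψ r s)
        = ({q : ℝ × ℝ | 0 < q.2 ∧ q.2 < q.1}).indicator (fun q => g (cdf ρ q.1)) := by
      ext q
      rcases q with ⟨s, r⟩
      simp only [Function.uncurry, hψ, Set.indicator_apply, mem_setOf_eq]
    rw [this]
    exact ((hg.comp (hF.comp measurable_fst)).indicator
      (MeasurableSet.inter (measurableSet_lt measurable_const measurable_snd)
        (measurableSet_lt measurable_snd measurable_fst)))
  have hstep3 : ∀ r : ℝ, ∫⁻ s, ψ r s ∂ρ
      = (Ioi (0:ℝ)).indicator (fun r => ∫⁻ s in Ioi r, g (cdf ρ s) ∂ρ) r := by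
    intro r
    rcases lt_or_ge 0 r with h | h
    · rw [indicator_of_mem (mem_Ioi.mpr h)]
      rw [← lintegral_indicator measurableSet_Ioi]
      congr 1
      ext s
      simp only [hψ, Set.indicator_apply, mem_setOf_eq, mem_Ioi]
      by_cases h2 : r < s
      · simp [h, h2]
      · simp [h2]
    · rw [indicator_of_notMem (fun hc => absurd (mem_Ioi.mp hc) (not_lt.mpr h))]
      have : ∀ s, ψ r s = 0 := by
        intro s
        simp only [hψ, Set.indicator_apply, mem_setOf_eq]
        rw [if_neg]
        exact fun hc => absurd h (not_le.mpr hc.1)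
      simp_rw [this]
      simp
  calc ∫⁻ s, ENNReal.ofReal s * g (cdf ρ s) ∂ρ
      = ∫⁻ s, ∫⁻ r, ψ r s ∂(volume : Measure ℝ) ∂ρ := by
        apply lintegral_congr
        intro s
        rw [hstep1 s]
    _ = ∫⁻ r, ∫⁻ s, ψ r s ∂ρ ∂(volume : Measure ℝ) := hswap
    _ = ∫⁻ r in Ioi (0:ℝ), ∫⁻ s in Ioi r, g (cdf ρ s) ∂ρ := by
        rw [← lintegral_indicator measurableSet_Ioi]
        apply lintegral_congr
        intro r
        rw [hstep3 r]
    _ = ∫⁻ r in Ioi (0:ℝ), ∫⁻ t in Ioc (cdf ρ r) 1, g t := by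
        apply setLIntegral_congr_fun measurableSet_Ioi
        intro r _
        exact setLIntegral_Ioi_comp_cdf ρ hna hg r

end chunk2

section chunk3

lemma lint_Ioc_ofReal {W' : ℝ → ℝ} (hW' : Antitone W') (hnn : ∀ t, 0 ≤ W' t)
    {u : ℝ} (hu : u ≤ 1) :
    ∫⁻ t in Ioc u 1, ENNReal.ofReal (W' t) = ENNReal.ofReal (∫ t in u..(1:ℝ), W' t) := by
  have hint : IntegrableOn W' (Ioc u 1) := by
    have h := (hW'.antitoneOn (uIcc u 1)).intervalIntegrable (μ := volume) (a := u) (b := 1)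
    rwa [intervalIntegrable_iff_integrableOn_Ioc_of_le hu] at h
  rw [intervalIntegral.integral_of_le hu,
    ofReal_integral_eq_lintegral_ofReal hint (ae_of_all _ hnn)]

lemma phi_aux (ρ : Measure ℝ) [IsProbabilityMeasure ρ] (hna : ∀ r : ℝ, ρ {r} = 0)
    (hpos : ρ (Iio 0) = 0) (hint : Integrable (fun r : ℝ => r) ρ)
    (W W' : ℝ → ℝ) (hW' : Antitone W') (hnn : ∀ t, 0 ≤ W' t)
    (heq : ∀ t ∈ Icc (0:ℝ) 1, W t = W' t) :
    PhiW W ρ = (∫⁻ r in Ioi (0:ℝ), ENNReal.ofReal (∫ t in (cdf ρ r)..(1:ℝ), W' t)).toReal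
    ∧ ∫⁻ r in Ioi (0:ℝ), ENNReal.ofReal (∫ t in (cdf ρ r)..(1:ℝ), W' t) ≠ ∞ := by
  have hF := cdf_measurable ρ
  have hW'm : Measurable W' := hW'.measurable
  set g : ℝ → ℝ≥0∞ := fun t => ENNReal.ofReal (W' t) with hg_def
  have hg : Measurable g := ENNReal.measurable_ofReal.comp hW'm
  have hae : ∀ᵐ s ∂ρ, 0 ≤ s := by
    rw [ae_iff]
    have : {s : ℝ | ¬ 0 ≤ s} = Iio 0 := by ext s; simp
    rw [this]; exact hpos
  have hmem : ∀ s, cdf ρ s ∈ Icc (0:ℝ) 1 := fun s => ⟨cdf_nonneg' ρ s, cdf_le_one' ρ s⟩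
  have hlayer := layer_cake ρ hna hg
  have hinner : ∀ r : ℝ, ∫⁻ t in Ioc (cdf ρ r) 1, g t
      = ENNReal.ofReal (∫ t in (cdf ρ r)..(1:ℝ), W' t) := fun r =>
    lint_Ioc_ofReal hW' hnn (cdf_le_one' ρ r)
  have hRHS : ∫⁻ r in Ioi (0:ℝ), ∫⁻ t in Ioc (cdf ρ r) 1, g t
      = ∫⁻ r in Ioi (0:ℝ), ENNReal.ofReal (∫ t in (cdf ρ r)..(1:ℝ), W' t) := by
    apply setLIntegral_congr_fun measurableSet_Ioi
    intro r _
    exact hinner r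
  -- finiteness
  have hfin : ∫⁻ s, ENNReal.ofReal s * g (cdf ρ s) ∂ρ ≠ ∞ := by
    have hb : ∀ s : ℝ, ENNReal.ofReal s * g (cdf ρ s)
        ≤ (fun s : ℝ => ENNReal.ofReal s * ENNReal.ofReal (W' 0)) s := by
      intro s
      exact mul_le_mul_right (ENNReal.ofReal_le_ofReal (hW' (cdf_nonneg' ρ s))) _
    refine ne_of_lt (lt_of_le_of_lt (lintegral_mono hb) ?_)
    rw [lintegral_mul_const _ ENNReal.measurable_ofReal]
    apply ENNReal.mul_lt_top _ ENNReal.ofReal_lt_top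
    calc ∫⁻ s, ENNReal.ofReal s ∂ρ ≤ ∫⁻ s, (‖s‖₊ : ℝ≥0∞) ∂ρ := by
          apply lintegral_mono
          intro s
          exact le_trans (ENNReal.ofReal_le_ofReal (le_abs_self s))
            (le_of_eq (Real.enorm_eq_ofReal_abs s).symm)
      _ < ∞ := hint.2
  -- PhiW equality
  have hPhi : PhiW W ρ = (∫⁻ s, ENNReal.ofReal s * g (cdf ρ s) ∂ρ).toReal := by
    have h1 : PhiW W ρ = ∫ s, s * W' (cdf ρ s) ∂ρ := by
      unfold PhiW
      congr 1
      funext s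
      rw [heq _ (hmem s)]
    have hmeas2 : AEMeasurable (fun s : ℝ => s * W' (cdf ρ s)) ρ :=
      (measurable_id.mul (hW'm.comp hF)).aemeasurable
    have h2 : ∫ s, s * W' (cdf ρ s) ∂ρ
        = (∫⁻ s, ENNReal.ofReal (s * W' (cdf ρ s)) ∂ρ).toReal := by
      apply integral_eq_lintegral_of_nonneg_ae
      · filter_upwards [hae] with s hs
        exact mul_nonneg hs (hnn _)
      · exact hmeas2.aestronglyMeasurable
    have h3 : ∫⁻ s, ENNReal.ofReal (s * W' (cdf ρ s)) ∂ρ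
        = ∫⁻ s, ENNReal.ofReal s * g (cdf ρ s) ∂ρ := by
      apply lintegral_congr_ae
      filter_upwards [hae] with s hs
      exact ENNReal.ofReal_mul hs
    rw [h1, h2, h3]
  constructor
  · rw [hPhi, hlayer, hRHS]
  · rw [← hRHS, ← hlayer]
    exact hfin

end chunk3

/-- Lemma 5: if `F_{μ_S}(r) ≤ α F_{μ_{S*}}(r)` for all `r ∈ (0,r*)` and `W` is nonincreasing
on `[0,1]` with `W(t) = 0` for `t ≥ F_{μ_{S*}}(r*)`, then
`Φ_W(μ_S) - Φ_W(μ_{S*}) ≥ (1-α) ∫_0^{r*} W(F_{μ_{S*}}(r)) F_{μ_{S*}}(r) dr`. -/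
theorem PhiW_gap_lower_bound {d : ℕ}
    (μ : Measure (EuclideanSpace ℝ (Fin d))) [IsProbabilityMeasure μ]
    (S Sstar : Set (EuclideanSpace ℝ (Fin d)))
    (hS : IsCompact S) (hSne : S.Nonempty) (hSstar : IsCompact Sstar) (hSstarne : Sstar.Nonempty)
    (hna₁ : ∀ r : ℝ, pushS μ S {r} = 0) (hna₂ : ∀ r : ℝ, pushS μ Sstar {r} = 0)
    (hint₁ : Integrable (fun r : ℝ => r) (pushS μ S))
    (hint₂ : Integrable (fun r : ℝ => r) (pushS μ Sstar))
    (rstar : ℝ) (hrstar : 0 < rstar) (α : ℝ) (hα : α ∈ Ioo (0 : ℝ) 1)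
    (hdom : ∀ r ∈ Ioo (0 : ℝ) rstar, cdf (pushS μ S) r ≤ α * cdf (pushS μ Sstar) r)
    (W : ℝ → ℝ) (hWanti : AntitoneOn W (Icc 0 1)) (hWnn : ∀ t ∈ Icc (0 : ℝ) 1, 0 ≤ W t)
    (hWzero : ∀ t, cdf (pushS μ Sstar) rstar ≤ t → W t = 0) :
    PhiW W (pushS μ S) - PhiW W (pushS μ Sstar) ≥
      (1 - α) * ∫ r in (0 : ℝ)..rstar,
        W (cdf (pushS μ Sstar) r) * cdf (pushS μ Sstar) r := by
  classical
  set ρ₁ := pushS μ S with hρ₁def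
  set ρ₂ := pushS μ Sstar with hρ₂def
  have hmeas1 : Measurable (distS S) := ((Metric.continuous_infDist_pt S).pow 2).measurable
  have hmeas2 : Measurable (distS Sstar) :=
    ((Metric.continuous_infDist_pt Sstar).pow 2).measurable
  haveI hp1 : IsProbabilityMeasure ρ₁ := Measure.isProbabilityMeasure_map hmeas1.aemeasurable
  haveI hp2 : IsProbabilityMeasure ρ₂ := Measure.isProbabilityMeasure_map hmeas2.aemeasurable
  have hpre1 : distS S ⁻¹' (Iio 0) = ∅ := by
    ext x
    simp only [mem_preimage, mem_Iio, mem_empty_iff_false, iff_false, not_lt, distS]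
    exact sq_nonneg _
  have hpre2 : distS Sstar ⁻¹' (Iio 0) = ∅ := by
    ext x
    simp only [mem_preimage, mem_Iio, mem_empty_iff_false, iff_false, not_lt, distS]
    exact sq_nonneg _
  have hpos1 : ρ₁ (Iio 0) = 0 := by
    rw [hρ₁def]
    show Measure.map (distS S) μ (Iio 0) = 0
    rw [Measure.map_apply hmeas1 measurableSet_Iio, hpre1, measure_empty]
  have hpos2 : ρ₂ (Iio 0) = 0 := by
    rw [hρ₂def]
    show Measure.map (distS Sstar) μ (Iio 0) = 0
    rw [Measure.map_apply hmeas2 measurableSet_Iio, hpre2, measure_empty]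
  -- the clamped weight function
  set W' : ℝ → ℝ := fun t => W (max 0 (min t 1)) with hW'def
  have hclamp_mem : ∀ t : ℝ, max 0 (min t 1) ∈ Icc (0:ℝ) 1 := fun t =>
    ⟨le_max_left _ _, max_le zero_le_one (min_le_right t 1)⟩
  have hclamp_mono : Monotone (fun t : ℝ => max 0 (min t 1)) := fun a b hab =>
    max_le_max le_rfl (min_le_min hab le_rfl)
  have hW'anti : Antitone W' := fun a b hab =>
    hWanti (hclamp_mem a) (hclamp_mem b) (hclamp_mono hab)
  have hW'nn : ∀ t, 0 ≤ W' t := fun t => hWnn _ (hclamp_mem t)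
  have heq : ∀ t ∈ Icc (0:ℝ) 1, W t = W' t := by
    intro t ht
    rw [hW'def]
    simp only
    rw [min_eq_left ht.2, max_eq_right ht.1]
  set β := cdf ρ₂ rstar with hβdef
  have hβ0 : 0 ≤ β := cdf_nonneg' ρ₂ rstar
  have hβ1 : β ≤ 1 := cdf_le_one' ρ₂ rstar
  have hW'zero : ∀ t, β ≤ t → W' t = 0 := by
    intro t ht
    apply hWzero
    calc β ≤ min t 1 := le_min ht hβ1
      _ ≤ max 0 (min t 1) := le_max_right _ _
  have hHint : ∀ a b : ℝ, IntervalIntegrable W' volume a b := fun a b =>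
    (hW'anti.antitoneOn (uIcc a b)).intervalIntegrable (μ := volume)
  have hHnn : ∀ u : ℝ, u ≤ 1 → 0 ≤ ∫ t in u..(1:ℝ), W' t := fun u hu =>
    intervalIntegral.integral_nonneg hu (fun t _ => hW'nn t)
  have hHzero : ∀ u : ℝ, β ≤ u → (∫ t in u..(1:ℝ), W' t) = 0 := by
    intro u hu
    have h : EqOn W' (fun _ => (0:ℝ)) (uIcc u 1) := by
      intro t ht
      apply hW'zero
      calc β ≤ min u 1 := le_min hu hβ1
        _ ≤ t := ht.1
    rw [intervalIntegral.integral_congr h]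
    simp
  -- the gap function
  set g₀ : ℝ → ENNReal := fun r =>
    (Ioo (0:ℝ) rstar).indicator
      (fun r => ENNReal.ofReal ((1-α) * (W' (cdf ρ₂ r) * cdf ρ₂ r))) r with hg₀def
  have hW'F₂_anti : Antitone (fun r => W' (cdf ρ₂ r)) :=
    hW'anti.comp_monotone (cdf_mono ρ₂)
  have hg₀meas : Measurable g₀ := by
    apply Measurable.indicator _ measurableSet_Ioo
    exact ENNReal.measurable_ofReal.comp
      (measurable_const.mul (hW'F₂_anti.measurable.mul (cdf_measurable ρ₂)))
  -- pointwise comparison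
  have hpt : ∀ r ∈ Ioi (0:ℝ),
      ENNReal.ofReal (∫ t in (cdf ρ₂ r)..(1:ℝ), W' t) + g₀ r
        ≤ ENNReal.ofReal (∫ t in (cdf ρ₁ r)..(1:ℝ), W' t) := by
    intro r hr
    by_cases hcase : r < rstar
    · have hrmem : r ∈ Ioo (0:ℝ) rstar := ⟨hr, hcase⟩
      rw [hg₀def]
      simp only
      rw [indicator_of_mem hrmem]
      have hdomr := hdom r hrmem
      have hv0 : 0 ≤ cdf ρ₂ r := cdf_nonneg' ρ₂ r
      have hv1 : cdf ρ₂ r ≤ 1 := cdf_le_one' ρ₂ r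
      have huv : cdf ρ₁ r ≤ cdf ρ₂ r := by nlinarith [hα.2]
      have hsplit : (∫ t in (cdf ρ₁ r)..(1:ℝ), W' t)
          = (∫ t in (cdf ρ₁ r)..(cdf ρ₂ r), W' t) + ∫ t in (cdf ρ₂ r)..(1:ℝ), W' t :=
        (intervalIntegral.integral_add_adjacent_intervals (hHint _ _) (hHint _ _)).symm
      have hlow : (cdf ρ₂ r - cdf ρ₁ r) * W' (cdf ρ₂ r)
          ≤ ∫ t in (cdf ρ₁ r)..(cdf ρ₂ r), W' t := by
        have hmono := intervalIntegral.integral_mono_on huv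
          (intervalIntegrable_const (c := W' (cdf ρ₂ r))) (hHint _ _)
          (fun t ht => hW'anti ht.2)
        rw [intervalIntegral.integral_const] at hmono
        simpa [smul_eq_mul] using hmono
      have hstep : (∫ t in (cdf ρ₂ r)..(1:ℝ), W' t) + (1-α) * (W' (cdf ρ₂ r) * cdf ρ₂ r)
          ≤ ∫ t in (cdf ρ₁ r)..(1:ℝ), W' t := by
        have h2 : (1-α) * cdf ρ₂ r ≤ cdf ρ₂ r - cdf ρ₁ r := by nlinarith
        have h3 : (1-α) * (W' (cdf ρ₂ r) * cdf ρ₂ r)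
            ≤ (cdf ρ₂ r - cdf ρ₁ r) * W' (cdf ρ₂ r) := by nlinarith [hW'nn (cdf ρ₂ r)]
        linarith
      calc ENNReal.ofReal (∫ t in (cdf ρ₂ r)..(1:ℝ), W' t)
            + ENNReal.ofReal ((1-α) * (W' (cdf ρ₂ r) * cdf ρ₂ r))
          = ENNReal.ofReal ((∫ t in (cdf ρ₂ r)..(1:ℝ), W' t)
              + (1-α) * (W' (cdf ρ₂ r) * cdf ρ₂ r)) := by
            rw [ENNReal.ofReal_add (hHnn _ hv1)
              (mul_nonneg (by linarith [hα.2]) (mul_nonneg (hW'nn _) hv0))]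
        _ ≤ _ := ENNReal.ofReal_le_ofReal hstep
    · rw [hg₀def]
      simp only
      rw [indicator_of_notMem (fun hc => hcase hc.2), add_zero]
      have h0 : (∫ t in (cdf ρ₂ r)..(1:ℝ), W' t) = 0 :=
        hHzero _ (cdf_mono ρ₂ (not_lt.mp hcase))
      rw [h0]
      simp
  -- representation of both Φ's
  obtain ⟨hphi1, hfin1⟩ := phi_aux ρ₁ hna₁ hpos1 hint₁ W W' hW'anti hW'nn heq
  obtain ⟨hphi2, hfin2⟩ := phi_aux ρ₂ hna₂ hpos2 hint₂ W W' hW'anti hW'nn heq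
  set A₁ := ∫⁻ r in Ioi (0:ℝ), ENNReal.ofReal (∫ t in (cdf ρ₁ r)..(1:ℝ), W' t) with hA₁def
  set A₂ := ∫⁻ r in Ioi (0:ℝ), ENNReal.ofReal (∫ t in (cdf ρ₂ r)..(1:ℝ), W' t) with hA₂def
  set B := ∫⁻ r in Ioi (0:ℝ), g₀ r with hBdef
  have hchain : A₂ + B ≤ A₁ := by
    rw [hA₂def, hBdef, ← lintegral_add_right _ hg₀meas]
    refine lintegral_mono_ae ?_
    exact (ae_restrict_iff' measurableSet_Ioi).mpr (ae_of_all _ hpt)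
  -- compute B
  haveI hfinres : IsFiniteMeasure (volume.restrict (Ioo (0:ℝ) rstar)) := by
    constructor
    rw [Measure.restrict_apply_univ, Real.volume_Ioo]
    exact ENNReal.ofReal_lt_top
  have hintf : Integrable (fun r => (1-α) * (W' (cdf ρ₂ r) * cdf ρ₂ r))
      (volume.restrict (Ioo (0:ℝ) rstar)) := by
    apply Integrable.mono' (integrable_const ((1-α) * (W' 0 * 1)))
    · exact (measurable_const.mul
        (hW'F₂_anti.measurable.mul (cdf_measurable ρ₂))).aestronglyMeasurable
    · apply ae_of_all
      intro r
      have h1 : 0 ≤ W' (cdf ρ₂ r) := hW'nn _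
      have h2 : W' (cdf ρ₂ r) ≤ W' 0 := hW'anti (cdf_nonneg' ρ₂ r)
      have h3 : 0 ≤ cdf ρ₂ r := cdf_nonneg' ρ₂ r
      have h4 : cdf ρ₂ r ≤ 1 := cdf_le_one' ρ₂ r
      have h5 : (0:ℝ) ≤ 1 - α := by linarith [hα.2]
      rw [Real.norm_eq_abs, abs_of_nonneg (mul_nonneg h5 (mul_nonneg h1 h3))]
      exact mul_le_mul_of_nonneg_left (mul_le_mul h2 h4 h3 (hW'nn 0)) h5
  have hB : B = ENNReal.ofReal ((1-α) * ∫ r in Ioo (0:ℝ) rstar, W' (cdf ρ₂ r) * cdf ρ₂ r) := by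
    rw [hBdef, hg₀def]
    simp only
    rw [lintegral_indicator measurableSet_Ioo, Measure.restrict_restrict measurableSet_Ioo,
      inter_eq_left.mpr (fun x hx => hx.1)]
    rw [← ofReal_integral_eq_lintegral_ofReal hintf (ae_of_all _ (fun r => by
      have h5 : (0:ℝ) ≤ 1 - α := by linarith [hα.2]
      exact mul_nonneg h5 (mul_nonneg (hW'nn _) (cdf_nonneg' ρ₂ r))))]
    rw [integral_const_mul]
  have hint_nn : 0 ≤ (1-α) * ∫ r in Ioo (0:ℝ) rstar, W' (cdf ρ₂ r) * cdf ρ₂ r := by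
    apply mul_nonneg (by linarith [hα.2])
    apply integral_nonneg
    intro r
    exact mul_nonneg (hW'nn _) (cdf_nonneg' ρ₂ r)
  have hBfin : B ≠ ∞ := by rw [hB]; exact ENNReal.ofReal_ne_top
  -- final arithmetic
  have hineq : A₂.toReal + B.toReal ≤ A₁.toReal := by
    rw [← ENNReal.toReal_add hfin2 hBfin]
    exact ENNReal.toReal_mono hfin1 hchain
  have hBtoReal : B.toReal = (1-α) * ∫ r in Ioo (0:ℝ) rstar, W' (cdf ρ₂ r) * cdf ρ₂ r := by
    rw [hB, ENNReal.toReal_ofReal hint_nn]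
  -- rewrite goal RHS
  have hRHSeq : (1 - α) * (∫ r in (0:ℝ)..rstar, W (cdf ρ₂ r) * cdf ρ₂ r)
      = (1-α) * ∫ r in Ioo (0:ℝ) rstar, W' (cdf ρ₂ r) * cdf ρ₂ r := by
    congr 1
    rw [intervalIntegral.integral_of_le hrstar.le, integral_Ioc_eq_integral_Ioo]
    congr 1
    funext r
    rw [heq _ ⟨cdf_nonneg' ρ₂ r, cdf_le_one' ρ₂ r⟩]
  rw [ge_iff_le, hRHSeq, hphi1, hphi2]
  linarith [hineq, hBtoReal]
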